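/- Let R > 0 and c₁, c₂ ∈ ℍ with d = dist c₁ c₂ satisfying d < 2R, and set D = Metric.closedBall c₁ R ∩ Metric.closedBall c₂ R (a hyperbolic lune). Then the inradius of D equals R − d/2, that is, sSup {Metric.infDist x (frontier D) | x ∈ D} = R − d/2. -/

import Mathlib

open scoped UpperHalfPlane MatrixGroups
open UpperHalfPlane Metric Set Real Complex


noncomputable def rotSL (θ : ℝ) : SL(2,ℝ) :=
  ⟨!![Real.cos θ, Real.sin θ; -Real.sin θ, Real.cos θ], by
    simp [Matrix.det_fin_two_of]
    nlinarith [Real.sin_sq_add_cos_sq θ]⟩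

lemma coe_rot_smul (θ : ℝ) (w : ℍ) :
    (↑(rotSL θ • w) : ℂ) =
      ((Real.cos θ : ℂ) * w + Real.sin θ) / ((-Real.sin θ : ℂ) * w + Real.cos θ) := by
  rw [UpperHalfPlane.specialLinearGroup_apply]
  simp [rotSL]

noncomputable def transSL (a : ℝ) : SL(2,ℝ) :=
  ⟨!![1, a; 0, 1], by simp [Matrix.det_fin_two_of]⟩

lemma coe_trans_smul (a : ℝ) (z : ℍ) : (↑(transSL a • z) : ℂ) = (z : ℂ) + a := by
  rw [UpperHalfPlane.specialLinearGroup_apply]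
  simp [transSL]

noncomputable def scaleSL (s : ℝ) (hs : 0 < s) : SL(2,ℝ) :=
  ⟨!![s, 0; 0, s⁻¹], by simp [Matrix.det_fin_two_of, hs.ne']⟩

lemma coe_scale_smul (s : ℝ) (hs : 0 < s) (z : ℍ) :
    (↑(scaleSL s hs • z) : ℂ) = (s^2 : ℝ) * z := by
  rw [UpperHalfPlane.specialLinearGroup_apply]
  have h0 : (s : ℂ) ≠ 0 := by exact_mod_cast hs.ne'
  simp only [scaleSL]
  norm_num [Matrix.cons_val_zero, Matrix.cons_val_one]
  ring

lemma rot_denom_ne (θ : ℝ) (w : ℍ) : ((-Real.sin θ : ℂ) * w + Real.cos θ) ≠ 0 := by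
  have h := UpperHalfPlane.linear_ne_zero (cd := ![-Real.sin θ, Real.cos θ]) w (by
    intro h0
    have h1 : -Real.sin θ = 0 := congrFun h0 0
    have h2 : Real.cos θ = 0 := congrFun h0 1
    nlinarith [Real.sin_sq_add_cos_sq θ])
  simpa using h

lemma exists_rot_re_eq_zero (w : ℍ) : ∃ θ : ℝ, (rotSL θ • w).re = 0 := by
  set G : ℝ → ℝ := fun θ =>
    (((Real.cos θ : ℂ) * w + Real.sin θ) / ((-Real.sin θ : ℂ) * w + Real.cos θ)).re with hG
  have hcont : Continuous G := by
    apply Complex.continuous_re.comp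
    apply Continuous.div
    · fun_prop
    · fun_prop
    · exact fun θ => rot_denom_ne θ w
  have hG0 : G 0 = w.re := by simp [hG, UpperHalfPlane.coe_re]
  have hGpi : G (Real.pi / 2) = -(w.re / Complex.normSq (w : ℂ)) := by
    simp [hG, Real.cos_pi_div_two, Real.sin_pi_div_two, Complex.div_re, Complex.normSq_neg,
      UpperHalfPlane.coe_re, UpperHalfPlane.coe_im]
    rw [neg_div]
  have hmem : (0:ℝ) ∈ Set.uIcc (G 0) (G (Real.pi/2)) := by
    rw [hG0, hGpi, Set.mem_uIcc]
    have hn : 0 < Complex.normSq (w : ℂ) := UpperHalfPlane.normSq_pos w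
    rcases le_or_gt 0 w.re with h | h
    · right
      constructor
      · simp only [neg_nonpos]
        positivity
      · exact h
    · left
      refine ⟨h.le, ?_⟩
      rw [neg_nonneg] at *
      nlinarith [div_nonpos_of_nonpos_of_nonneg h.le hn.le]
  obtain ⟨θ, -, hθ⟩ := intermediate_value_uIcc (hcont.continuousOn) hmem
  refine ⟨θ, ?_⟩
  rw [← UpperHalfPlane.coe_re, coe_rot_smul]
  exact hθ

lemma exists_sl_re_zero (z w : ℍ) :
    ∃ g : SL(2,ℝ), (g • z).re = 0 ∧ (g • w).re = 0 := by
  have him : 0 < z.im := z.im_pos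
  set s : ℝ := Real.sqrt z.im⁻¹ with hs
  have hs0 : 0 < s := Real.sqrt_pos.2 (inv_pos.2 him)
  have hs2 : s ^ 2 = z.im⁻¹ := Real.sq_sqrt (inv_pos.2 him).le
  set h : SL(2,ℝ) := scaleSL s hs0 * transSL (-z.re) with hh
  have hcoe : (↑(h • z) : ℂ) = Complex.I := by
    rw [hh, mul_smul, coe_scale_smul, coe_trans_smul, hs2]
    have : ((z : ℂ) + (-z.re : ℝ)) = (z.im : ℝ) * Complex.I := by
      have := (Complex.re_add_im (z : ℂ)).symm
      rw [UpperHalfPlane.coe_re, UpperHalfPlane.coe_im] at this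
      rw [this]; push_cast; ring
    rw [this]
    push_cast
    rw [← mul_assoc]
    norm_cast
    rw [inv_mul_cancel₀ him.ne']
    simp
  obtain ⟨θ, hθ⟩ := exists_rot_re_eq_zero (h • w)
  refine ⟨rotSL θ * h, ?_, ?_⟩
  · rw [mul_smul, ← UpperHalfPlane.coe_re, coe_rot_smul, hcoe]
    have hne := rot_denom_ne θ (h • z)
    rw [hcoe] at hne
    have : ((Real.cos θ : ℂ) * Complex.I + Real.sin θ) /
        ((-Real.sin θ : ℂ) * Complex.I + Real.cos θ) = Complex.I := by
      rw [div_eq_iff hne]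
      linear_combination (Real.sin θ : ℂ) * Complex.I_mul_I
    rw [this]; simp
  · rw [mul_smul]; exact hθ

lemma dist_axis (p q : ℍ) (hp : p.re = 0) (hq : q.re = 0) :
    dist p q = |Real.log p.im - Real.log q.im| := by
  rw [UpperHalfPlane.dist_of_re_eq (hp.trans hq.symm), Real.dist_eq]

noncomputable def axisPt (v : ℝ) (hv : 0 < v) : ℍ :=
  UpperHalfPlane.mk ((v : ℂ) * Complex.I) (by simpa using hv)

lemma axisPt_re (v : ℝ) (hv : 0 < v) : (axisPt v hv).re = 0 := by
  simp [axisPt, UpperHalfPlane.re]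

lemma axisPt_im (v : ℝ) (hv : 0 < v) : (axisPt v hv).im = v := by
  simp [axisPt, UpperHalfPlane.im]

lemma exists_midpoint (z w : ℍ) :
    ∃ m : ℍ, dist z m = dist z w / 2 ∧ dist m w = dist z w / 2 := by
  obtain ⟨g, hz, hw⟩ := exists_sl_re_zero z w
  set z' := g • z
  set w' := g • w
  have hv : 0 < Real.sqrt (z'.im * w'.im) :=
    Real.sqrt_pos.2 (mul_pos z'.im_pos w'.im_pos)
  set m' := axisPt _ hv with hm'
  have hlog : Real.log (m'.im) = (Real.log z'.im + Real.log w'.im) / 2 := by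
    rw [hm', axisPt_im, Real.log_sqrt (mul_pos z'.im_pos w'.im_pos).le,
      Real.log_mul z'.im_pos.ne' w'.im_pos.ne']
  have hdzw : dist z w = |Real.log z'.im - Real.log w'.im| := by
    rw [← dist_smul g z w]
    exact dist_axis z' w' hz hw
  refine ⟨g⁻¹ • m', ?_, ?_⟩
  · rw [← dist_smul g, smul_inv_smul]
    rw [dist_axis z' m' hz (axisPt_re _ hv), hlog, hdzw]
    rw [show Real.log z'.im - (Real.log z'.im + Real.log w'.im)/2
        = (Real.log z'.im - Real.log w'.im)/2 by ring, abs_div]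
    norm_num
  · rw [← dist_smul g, smul_inv_smul]
    rw [dist_axis m' w' (axisPt_re _ hv) hw, hlog, hdzw]
    rw [show (Real.log z'.im + Real.log w'.im)/2 - Real.log w'.im
        = (Real.log z'.im - Real.log w'.im)/2 by ring, abs_div]
    norm_num

lemma exists_extension (z w : ℍ) (t : ℝ) (ht : 0 ≤ t) :
    ∃ y : ℍ, dist w y = t ∧ dist z y = dist z w + t := by
  obtain ⟨g, hz, hw⟩ := exists_sl_re_zero z w
  set z' := g • z
  set w' := g • w
  set A := Real.log z'.im with hA
  set B := Real.log w'.im with hB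
  set e : ℝ := if A ≤ B then B + t else B - t with he
  set y' := axisPt (Real.exp e) (Real.exp_pos e) with hy'
  have hlog : Real.log y'.im = e := by rw [hy', axisPt_im, Real.log_exp]
  have hdzw : dist z w = |A - B| := by
    rw [← dist_smul g z w]; exact dist_axis z' w' hz hw
  refine ⟨g⁻¹ • y', ?_, ?_⟩
  · rw [← dist_smul g, smul_inv_smul, dist_axis w' y' hw (axisPt_re _ _), hlog, he]
    split_ifs <;> simp [← hB, abs_of_nonpos, abs_of_nonneg, ht, abs_sub_comm]
  · rw [← dist_smul g, smul_inv_smul, dist_axis z' y' hz (axisPt_re _ _), hlog, hdzw, he]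
    rcases le_or_gt A B with h | h
    · rw [if_pos h, _root_.abs_of_nonpos (by linarith), _root_.abs_of_nonpos (by linarith)]
      ring
    · rw [if_neg (not_le.2 h), _root_.abs_of_nonneg (by linarith), _root_.abs_of_nonneg (by linarith)]
      ring

lemma isPreconnected_closedBall_H (x : ℍ) (r : ℝ) :
    IsPreconnected (Metric.closedBall x r) := by
  have h1 : IsPreconnected (((↑) : ℍ → ℂ) '' Metric.closedBall x r) := by
    rw [UpperHalfPlane.image_coe_closedBall]
    exact (convex_closedBall _ _).isPreconnected
  exact (UpperHalfPlane.isEmbedding_coe.toIsInducing.isPreconnected_image).1 h1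

theorem inradius_of_hyperbolic_lune
    (R : ℝ) (hR : 0 < R)
    (c₁ c₂ : ℍ) (d : ℝ) (hd : d = dist c₁ c₂) (hd2 : d < 2 * R)
    (D : Set ℍ)
    (hD : D = Metric.closedBall c₁ R ∩ Metric.closedBall c₂ R) :
    sSup {y : ℝ | ∃ x ∈ D, Metric.infDist x (frontier D) = y} = R - d / 2 := by
  have hd0 : 0 ≤ d := hd ▸ dist_nonneg
  have hRd : 0 < R - d / 2 := by linarith
  obtain ⟨m, hm1, hm2⟩ := exists_midpoint c₁ c₂
  have hmc₁ : dist m c₁ = d / 2 := by rw [dist_comm, hm1, ← hd]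
  have hmc₂ : dist m c₂ = d / 2 := by rw [hm2, ← hd]
  have hmD : m ∈ D := by
    rw [hD]
    exact ⟨Metric.mem_closedBall.2 (by rw [hmc₁]; linarith),
      Metric.mem_closedBall.2 (by rw [hmc₂]; linarith)⟩
  have hDclosed : IsClosed D := hD ▸ (Metric.isClosed_closedBall.inter Metric.isClosed_closedBall)
  obtain ⟨p, hp1, hp2⟩ := exists_extension c₁ c₁ (R + 1) (by linarith)
  have hpD : p ∉ D := by
    rw [hD]
    intro hp
    have h1 : dist p c₁ ≤ R := Metric.mem_closedBall.1 hp.1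
    rw [dist_self, zero_add] at hp2
    rw [dist_comm] at h1
    rw [hp2] at h1
    linarith
  have hfr : (frontier D).Nonempty := by
    rw [Set.nonempty_iff_ne_empty]
    intro hfe
    have hclopen : IsClopen D := isClopen_iff_frontier_eq_empty.2 hfe
    rcases isClopen_iff.1 hclopen with h | h
    · rw [h] at hmD; exact hmD
    · exact hpD (h ▸ Set.mem_univ p)
  have claim1 : ∀ x ∈ D, Metric.infDist x (frontier D) ≤ R - d / 2 := by
    intro x hx
    by_contra hcon
    push_neg at hcon
    set r := Metric.infDist x (frontier D) with hr
    set r' := (R - d / 2 + r) / 2 with hr'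
    have h1 : R - d / 2 < r' := by rw [hr']; linarith
    have h2 : r' < r := by rw [hr']; linarith
    have h3 : 0 < r' := lt_trans hRd h1
    have hxf : x ∉ frontier D := by
      intro hxf
      have hle : r ≤ 0 := by
        rw [hr]
        simpa using Metric.infDist_le_dist_of_mem (x := x) hxf
      linarith
    have hxint : x ∈ interior D := by
      by_contra hni
      rw [hDclosed.frontier_eq] at hxf
      exact hxf ⟨hx, hni⟩
    have hball : Metric.closedBall x r' ⊆ D := by
      have hpre := isPreconnected_closedBall_H x r'
      have hsub : Metric.closedBall x r' ⊆ interior D ∪ (closure D)ᶜ := by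
        intro y hy
        by_cases hyc : y ∈ closure D
        · left
          by_contra hni
          have hyf : y ∈ frontier D := ⟨hyc, hni⟩
          have hinf := Metric.infDist_le_dist_of_mem (x := x) hyf
          rw [← hr] at hinf
          have hxy : dist x y ≤ r' := by
            rw [dist_comm]; exact Metric.mem_closedBall.1 hy
          linarith
        · right; exact hyc
      have hdisj : Disjoint (interior D) (closure D)ᶜ := by
        rw [Set.disjoint_left]
        intro a ha hac
        exact hac (subset_closure (interior_subset ha))
      have hKu := hpre.subset_left_of_subset_union isOpen_interior
        isClosed_closure.isOpen_compl hdisj hsub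
        ⟨x, Metric.mem_closedBall_self h3.le, hxint⟩
      exact hKu.trans interior_subset
    have hbound : ∀ c : ℍ, D ⊆ Metric.closedBall c R → dist c x + r' ≤ R := by
      intro c hc
      obtain ⟨y, hy1, hy2⟩ := exists_extension c x r' h3.le
      have hyD : y ∈ D := hball (by
        rw [Metric.mem_closedBall, dist_comm]; exact hy1.le)
      have h4 : dist y c ≤ R := Metric.mem_closedBall.1 (hc hyD)
      rw [dist_comm, hy2] at h4
      linarith
    have hb1 := hbound c₁ (by rw [hD]; exact Set.inter_subset_left)
    have hb2 := hbound c₂ (by rw [hD]; exact Set.inter_subset_right)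
    have htri : d ≤ dist c₁ x + dist x c₂ := by rw [hd]; exact dist_triangle _ _ _
    have hsymm : dist x c₂ = dist c₂ x := dist_comm _ _
    linarith
  have claim2 : R - d / 2 ≤ Metric.infDist m (frontier D) := by
    refine le_of_not_gt fun hlt => ?_
    obtain ⟨y, hyf, hy⟩ := (Metric.infDist_lt_iff hfr).1 hlt
    have h1 : y ∈ (frontier (Metric.closedBall c₁ R) ∩ closure (Metric.closedBall c₂ R)) ∪
        (closure (Metric.closedBall c₁ R) ∩ frontier (Metric.closedBall c₂ R)) := by
      rw [hD] at hyf
      exact frontier_inter_subset _ _ hyf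
    have key : R - d / 2 ≤ dist m y := by
      rcases h1 with ⟨hy1, -⟩ | ⟨-, hy2⟩
      · have hsp : dist y c₁ = R :=
          Metric.mem_sphere.1 (Metric.frontier_closedBall_subset_sphere hy1)
        have htri : dist y c₁ ≤ dist y m + dist m c₁ := dist_triangle _ _ _
        rw [hsp, hmc₁] at htri
        rw [dist_comm]
        linarith
      · have hsp : dist y c₂ = R :=
          Metric.mem_sphere.1 (Metric.frontier_closedBall_subset_sphere hy2)
        have htri : dist y c₂ ≤ dist y m + dist m c₂ := dist_triangle _ _ _
        rw [hsp, hmc₂] at htri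
        rw [dist_comm]
        linarith
    linarith
  have hmem : (R - d / 2) ∈ {y : ℝ | ∃ x ∈ D, Metric.infDist x (frontier D) = y} :=
    ⟨m, hmD, le_antisymm (claim1 m hmD) claim2⟩
  apply le_antisymm
  · refine csSup_le ⟨_, hmem⟩ ?_
    rintro y ⟨x, hx, rfl⟩
    exact claim1 x hx
  · refine le_csSup ⟨R - d / 2, ?_⟩ hmem
    rintro y ⟨x, hx, rfl⟩
    exact claim1 x hx
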